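/- arXiv:1104.0619 — 3 statements merged into one kernel-verified Lean document; each statement's English description precedes it below -/
import Mathlib

section
/- There exists a constant C such that for all k ∈ ℝ and σ ≥ 0, |e^{−|k|σ} − e^{−κ(k)σ}| ≤ C (|k|^{1/2} + |k|) σ e^{−|k|σ}, where κ(k) = √(k² − ik). -/
noncomputable def kappa (k : ℝ) : ℂ := ((k : ℂ)^2 - Complex.I * k) ^ ((1:ℂ)/2)

open Complex

-- |1 - exp(-w)| ≤ |w| when Re w ≥ 0
lemma one_sub_exp_neg_le (w : ℂ) (hw : 0 ≤ w.re) :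
    ‖1 - Complex.exp (-w)‖ ≤ ‖w‖ := by
  have hderiv : ∀ t ∈ Set.Icc (0:ℝ) 1,
      HasDerivWithinAt (fun t : ℝ => Complex.exp (-(t:ℂ) * w))
        (Complex.exp (-(t:ℂ) * w) * (-w)) (Set.Icc 0 1) t := by
    intro t _
    have h1 : HasDerivAt (fun t : ℝ => ((t:ℂ))) 1 t := Complex.ofRealCLM.hasDerivAt
    have h2 : HasDerivAt (fun t : ℝ => -(t:ℂ) * w) (-w) t := by
      simpa using (h1.neg.mul_const w)
    exact (h2.cexp.hasDerivWithinAt)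
  have hb : ∀ t ∈ Set.Icc (0:ℝ) 1,
      ‖Complex.exp (-(t:ℂ) * w) * (-w)‖ ≤ ‖w‖ := by
    intro t ht
    rw [norm_mul, norm_neg]
    have : ‖Complex.exp (-(t:ℂ) * w)‖ ≤ 1 := by
      rw [Complex.norm_exp]
      have : (-(t:ℂ) * w).re = -(t * w.re) := by simp
      rw [this]
      exact Real.exp_le_one_iff.mpr (by nlinarith [ht.1])
    calc ‖Complex.exp (-(t:ℂ) * w)‖ * ‖w‖ ≤ 1 * ‖w‖ :=
          mul_le_mul_of_nonneg_right this (norm_nonneg _)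
      _ = ‖w‖ := by simp
  have := (convex_Icc (0:ℝ) 1).norm_image_sub_le_of_norm_hasDerivWithin_le
      hderiv hb (Set.left_mem_Icc.mpr zero_le_one) (Set.right_mem_Icc.mpr zero_le_one)
  have h := (by simpa using this : ‖Complex.exp (-w) - 1‖ ≤ ‖w‖)
  rwa [← norm_neg, neg_sub] at h

lemma zre (k : ℝ) : ((k:ℂ)^2 - Complex.I * k).re = k^2 := by
  simp [Complex.sub_re, Complex.mul_re, pow_two, Complex.mul_re]

lemma kappa_re (k : ℝ) : |k| ≤ (kappa k).re := by
  have h2 : ((1:ℂ)/2) = (2⁻¹ : ℂ) := by norm_num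
  rw [kappa, h2, Complex.cpow_inv_two_re, zre]
  have habs : k^2 ≤ ‖(k:ℂ)^2 - Complex.I * k‖ := by
    have h := Complex.abs_re_le_norm ((k:ℂ)^2 - Complex.I * k)
    rw [zre] at h; exact (le_abs_self _).trans h
  have h3 : Real.sqrt (k^2) ≤ Real.sqrt ((‖(k:ℂ)^2 - Complex.I * k‖ + k^2)/2) := by
    apply Real.sqrt_le_sqrt; linarith
  rwa [Real.sqrt_sq_eq_abs] at h3

lemma kappa_abs (k : ℝ) : ‖kappa k‖ ≤ Real.sqrt |k| + |k| := by
  have h2 : ((1:ℂ)/2) = (((1:ℝ)/2 : ℝ) : ℂ) := by norm_num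
  rw [kappa, h2, Complex.norm_cpow_real, ← Real.sqrt_eq_rpow]
  have h1 : ‖(k:ℂ)^2‖ = k^2 := by
    rw [norm_pow, Complex.norm_real, Real.norm_eq_abs, _root_.sq_abs]
  have hz : ‖(k:ℂ)^2 - Complex.I * k‖ ≤ k^2 + |k| := by
    calc ‖(k:ℂ)^2 - Complex.I * k‖
        ≤ ‖(k:ℂ)^2‖ + ‖Complex.I * k‖ :=
          norm_sub_le ((k:ℂ)^2) (Complex.I * k)
      _ = k^2 + |k| := by rw [h1]; simp
  have h3 : Real.sqrt (‖(k:ℂ)^2 - Complex.I * k‖) ≤ Real.sqrt (k^2 + |k|) :=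
    Real.sqrt_le_sqrt hz
  refine h3.trans ?_
  have hk : (0:ℝ) ≤ |k| := abs_nonneg k
  have hs : Real.sqrt |k| ^ 2 = |k| := Real.sq_sqrt hk
  have hs0 : (0:ℝ) ≤ Real.sqrt |k| := Real.sqrt_nonneg _
  have hle : k^2 + |k| ≤ (Real.sqrt |k| + |k|)^2 := by nlinarith [_root_.sq_abs k]
  calc Real.sqrt (k^2 + |k|) ≤ Real.sqrt ((Real.sqrt |k| + |k|)^2) := Real.sqrt_le_sqrt hle
    _ = Real.sqrt |k| + |k| := Real.sqrt_sq (by positivity)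

theorem exp_diff_bound :
    ∃ C : ℝ, ∀ k σ : ℝ, 0 ≤ σ →
      ‖Complex.exp (-((|k| : ℝ) : ℂ) * σ) - Complex.exp (-kappa k * σ)‖
        ≤ C * (|k| ^ ((1:ℝ)/2) + |k|) * σ * Real.exp (-|k| * σ) := by
  refine ⟨2, fun k σ hσ => ?_⟩
  set a : ℝ := |k| with ha
  set κ : ℂ := kappa k with hκ
  set w : ℂ := (κ - (a:ℂ)) * (σ:ℂ) with hw
  have hsplit : Complex.exp (-κ * σ) = Complex.exp (-(a:ℂ) * σ) * Complex.exp (-w) := by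
    rw [← Complex.exp_add, hw]; ring_nf
  have hfact : Complex.exp (-((a : ℝ) : ℂ) * σ) - Complex.exp (-κ * σ)
      = Complex.exp (-(a:ℂ) * σ) * (1 - Complex.exp (-w)) := by
    rw [hsplit]; ring
  rw [hfact, norm_mul]
  have habs1 : ‖Complex.exp (-(a:ℂ) * σ)‖ = Real.exp (-a * σ) := by
    rw [Complex.norm_exp]; norm_num
  have hwre : 0 ≤ w.re := by
    have h1 : w.re = (κ.re - a) * σ := by
      simp [hw, Complex.mul_re, Complex.sub_re, Complex.ofReal_re, Complex.ofReal_im]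
    rw [h1]
    exact mul_nonneg (by linarith [kappa_re k]) hσ
  have h2 : ‖1 - Complex.exp (-w)‖ ≤ ‖w‖ := one_sub_exp_neg_le w hwre
  have h3 : ‖w‖ ≤ 2 * (|k| ^ ((1:ℝ)/2) + |k|) * σ := by
    rw [hw, norm_mul, Complex.norm_real, Real.norm_eq_abs, _root_.abs_of_nonneg hσ]
    have h4 : ‖κ - (a:ℂ)‖ ≤ Real.sqrt a + 2 * a := by
      calc ‖κ - (a:ℂ)‖ ≤ ‖κ‖ + ‖(a:ℂ)‖ := by
            simpa using norm_sub_le κ ((a:ℂ))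
        _ ≤ (Real.sqrt |k| + |k|) + a := by
            have := kappa_abs k
            simp only [Complex.norm_real, Real.norm_eq_abs, _root_.abs_of_nonneg (abs_nonneg k), ← ha]
            rw [ha, abs_abs, hκ]
            linarith [kappa_abs k]
        _ = Real.sqrt a + 2 * a := by rw [ha]; ring
    have hrpow : |k| ^ ((1:ℝ)/2) = Real.sqrt |k| := (Real.sqrt_eq_rpow _).symm
    rw [hrpow]
    apply mul_le_mul_of_nonneg_right _ hσ
    have := Real.sqrt_nonneg a
    rw [ha] at h4 ⊢
    linarith
  calc ‖Complex.exp (-(a:ℂ) * σ)‖ * ‖1 - Complex.exp (-w)‖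
      ≤ Real.exp (-a * σ) * (2 * (|k| ^ ((1:ℝ)/2) + |k|) * σ) := by
        rw [habs1]
        exact mul_le_mul_of_nonneg_left (h2.trans h3) (Real.exp_nonneg _)
    _ = 2 * (|k| ^ ((1:ℝ)/2) + |k|) * σ * Real.exp (-|k| * σ) := by rw [ha]; ring
end

section
/- For k ≠ 0 and s′ ≥ 0, t ≥ 1 with |k| > t^{−s′}, one has t^{−s′/2} |κ(k)|^{−1} ≤ C μ_{1/2,s′}(k,t) and t^{−s′} |κ(k)|^{−1} ≤ C μ_{1,s′}(k,t), for a universal constant C, where κ(k) = √(k² − ik) and μ_{α,r}(k,t) = 1/(1+(|k|t^r)^α). -/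
noncomputable def mu (α r k t : ℝ) : ℝ := 1 / (1 + (|k| * t ^ r) ^ α)

theorem inv_kappa_mu_bound :
    ∃ C : ℝ, ∀ k t s' : ℝ, k ≠ 0 → 0 ≤ s' → 1 ≤ t → t ^ (-s') < |k| →
      t ^ (-(s'/2)) * ‖kappa k‖⁻¹ ≤ C * mu (1/2) s' k t ∧
      t ^ (-s') * ‖kappa k‖⁻¹ ≤ C * mu 1 s' k t := by
  use 2
  intro k t s' hk hs ht hkt
  have ht0 : (0:ℝ) < t := lt_of_lt_of_le one_pos ht
  have hts : (0:ℝ) < t ^ s' := Real.rpow_pos_of_pos ht0 s'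
  have hkabs : (0:ℝ) < |k| := abs_pos.mpr hk
  set X := |k| * t ^ s' with hXdef
  have hX1 : 1 < X := by
    have h1 : t ^ (-s') * t ^ s' = 1 := by
      rw [Real.rpow_neg ht0.le, inv_mul_cancel₀ hts.ne']
    calc (1:ℝ) = t ^ (-s') * t ^ s' := h1.symm
      _ < |k| * t ^ s' := mul_lt_mul_of_pos_right hkt hts
  have hX0 : (0:ℝ) < X := lt_trans one_pos hX1
  -- abs of kappa
  have hz : (k:ℂ)^2 - Complex.I * k = (k:ℂ) * ((k:ℂ) - Complex.I) := by ring
  have hA : ‖(k:ℂ)^2 - Complex.I * k‖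
      = |k| * ‖(k:ℂ) - Complex.I‖ := by
    rw [hz, norm_mul, Complex.norm_real, Real.norm_eq_abs]
  have hre : |k| ≤ ‖(k:ℂ) - Complex.I‖ := by
    have := Complex.abs_re_le_norm ((k:ℂ) - Complex.I)
    simpa using this
  have him : 1 ≤ ‖(k:ℂ) - Complex.I‖ := by
    have := Complex.abs_im_le_norm ((k:ℂ) - Complex.I)
    simpa using this
  have hA1 : |k| ≤ ‖(k:ℂ)^2 - Complex.I * k‖ := by
    rw [hA]; nlinarith
  have hA2 : |k| * |k| ≤ ‖(k:ℂ)^2 - Complex.I * k‖ := by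
    rw [hA]; nlinarith
  have hkap : ‖kappa k‖
      = ‖(k:ℂ)^2 - Complex.I * k‖ ^ ((1:ℝ)/2) := by
    rw [kappa, show ((1:ℂ)/2) = (((1:ℝ)/2 : ℝ) : ℂ) by norm_num]
    exact Complex.norm_cpow_real _ _
  have hkap1 : |k| ^ ((1:ℝ)/2) ≤ ‖kappa k‖ := by
    rw [hkap]
    exact Real.rpow_le_rpow hkabs.le hA1 (by norm_num)
  have hmm : (|k| * |k|) ^ ((1:ℝ)/2) = |k| := by
    rw [Real.mul_rpow hkabs.le hkabs.le, ← Real.rpow_add hkabs]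
    norm_num
  have hkap2 : |k| ≤ ‖kappa k‖ := by
    rw [hkap, ← hmm]
    exact Real.rpow_le_rpow (by positivity) hA2 (by norm_num)
  have hkap0 : (0:ℝ) < ‖kappa k‖ := lt_of_lt_of_le hkabs hkap2
  have hkr0 : (0:ℝ) < |k| ^ ((1:ℝ)/2) := Real.rpow_pos_of_pos hkabs _
  constructor
  · -- first bound
    have hY0 : (0:ℝ) < X ^ ((1:ℝ)/2) := Real.rpow_pos_of_pos hX0 _
    have hY1 : (1:ℝ) ≤ X ^ ((1:ℝ)/2) := by
      have := Real.rpow_le_rpow (le_of_lt one_pos) hX1.le (by norm_num : (0:ℝ) ≤ 1/2)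
      simpa using this
    have hid : t ^ (-(s'/2)) * (|k| ^ ((1:ℝ)/2))⁻¹ = (X ^ ((1:ℝ)/2))⁻¹ := by
      rw [hXdef, Real.mul_rpow hkabs.le hts.le, ← Real.rpow_mul ht0.le,
        show s' * (1/2) = s'/2 by ring, Real.rpow_neg ht0.le (s'/2), mul_inv, mul_comm]
    calc t ^ (-(s'/2)) * ‖kappa k‖⁻¹
        ≤ t ^ (-(s'/2)) * (|k| ^ ((1:ℝ)/2))⁻¹ := by
          apply mul_le_mul_of_nonneg_left (inv_anti₀ hkr0 hkap1)
          positivity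
      _ = (X ^ ((1:ℝ)/2))⁻¹ := hid
      _ ≤ 2 * mu (1/2) s' k t := by
          rw [mu, mul_one_div, inv_eq_one_div, div_le_div_iff₀ hY0 (by linarith)]
          nlinarith
  · -- second bound
    have hid : t ^ (-s') * |k|⁻¹ = X⁻¹ := by
      rw [hXdef, Real.rpow_neg ht0.le, mul_inv, mul_comm]
    calc t ^ (-s') * ‖kappa k‖⁻¹
        ≤ t ^ (-s') * |k|⁻¹ := by
          apply mul_le_mul_of_nonneg_left (inv_anti₀ hkabs hkap2)
          positivity
      _ = X⁻¹ := hid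
      _ ≤ 2 * mu 1 s' k t := by
          rw [mu, Real.rpow_one, mul_one_div, inv_eq_one_div, div_le_div_iff₀ hX0 (by linarith)]
          nlinarith
end

section
/- Let α ≥ 0, r ≥ 0, δ > 1 and β ∈ [0,1]. Then there exists a constant C such that for all t ≥ 1 and k ∈ ℝ, e^{|k|(t−1)} ∫_t^∞ e^{−|k|(s−1)} |k|^β s^{−δ} μ_{α,r}(k,s) ds ≤ C t^{−(δ−1+β)} μ_{α,r}(k,t). -/
open MeasureTheory

lemma integral_exp_neg_mul_Ioi {b : ℝ} (hb : 0 < b) (a : ℝ) :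
    ∫ x in Set.Ioi a, Real.exp (-(b * x)) = Real.exp (-(b * a)) / b := by
  have hderiv : ∀ x ∈ Set.Ici a,
      HasDerivAt (fun x => -Real.exp (-(b * x)) / b) (Real.exp (-(b * x))) x := by
    intro x _
    have h1 : HasDerivAt (fun x : ℝ => -(b * x)) (-b) x := by
      simpa using ((hasDerivAt_id x).const_mul b).fun_neg
    have h2 := (Real.hasDerivAt_exp (-(b * x))).comp x h1
    have h3 := (h2.neg).div_const b
    refine h3.congr_deriv ?_
    field_simp
  have hint : IntegrableOn (fun x => Real.exp (-(b * x))) (Set.Ioi a) := by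
    simpa [neg_mul] using exp_neg_integrableOn_Ioi a hb
  have htend : Filter.Tendsto (fun x => -Real.exp (-(b * x)) / b) Filter.atTop (nhds 0) := by
    have h1 : Filter.Tendsto (fun x : ℝ => b * x) Filter.atTop Filter.atTop :=
      Filter.Tendsto.const_mul_atTop hb Filter.tendsto_id
    have h2 : Filter.Tendsto (fun x : ℝ => -(b * x)) Filter.atTop Filter.atBot :=
      Filter.tendsto_neg_atTop_atBot.comp h1
    have h3 : Filter.Tendsto (fun x => Real.exp (-(b * x))) Filter.atTop (nhds 0) :=
      Real.tendsto_exp_atBot.comp h2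
    simpa using (h3.neg).div_const b
  have := integral_Ioi_of_hasDerivAt_of_tendsto' hderiv hint htend
  rw [this]
  ring

theorem semigroup_abs_k_integral_bound (α r δ β : ℝ)
    (hα : 0 ≤ α) (hr : 0 ≤ r) (hδ : 1 < δ) (hβ0 : 0 ≤ β) (hβ1 : β ≤ 1) :
    ∃ C : ℝ, ∀ t k : ℝ, 1 ≤ t →
      Real.exp (|k| * (t - 1)) *
          ∫ s in Set.Ioi t, Real.exp (-|k| * (s - 1)) * |k| ^ β * s ^ (-δ) * mu α r k s
        ≤ C * t ^ (-(δ - 1 + β)) * mu α r k t := by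
  refine ⟨1 / (δ - 1) + 1, fun t k ht => ?_⟩
  set K := |k| with hKdef
  have hK : 0 ≤ K := abs_nonneg k
  have ht0 : (0:ℝ) < t := lt_of_lt_of_le one_pos ht
  have hδ1 : (0:ℝ) < δ - 1 := by linarith
  have hmu_nonneg : ∀ s : ℝ, 0 < s → 0 ≤ mu α r k s := by
    intro s hs
    unfold mu
    have h1 : (0:ℝ) ≤ (K * s ^ r) ^ α :=
      Real.rpow_nonneg (mul_nonneg hK (Real.rpow_nonneg hs.le r)) α
    positivity
  have hmut : 0 ≤ mu α r k t := hmu_nonneg t ht0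
  have hmu_mono : ∀ s : ℝ, t ≤ s → mu α r k s ≤ mu α r k t := by
    intro s hs
    unfold mu
    have hb : K * t ^ r ≤ K * s ^ r :=
      mul_le_mul_of_nonneg_left (Real.rpow_le_rpow ht0.le hs hr) hK
    have hbase : (0:ℝ) ≤ K * t ^ r := mul_nonneg hK (Real.rpow_nonneg ht0.le r)
    have h1 : (K * t ^ r) ^ α ≤ (K * s ^ r) ^ α := Real.rpow_le_rpow hbase hb hα
    have h2 : (0:ℝ) < 1 + (K * t ^ r) ^ α := by
      have := Real.rpow_nonneg hbase α; linarith
    exact one_div_le_one_div_of_le h2 (by linarith)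
  have hexpid : ∀ s : ℝ,
      Real.exp (K * (t - 1)) * Real.exp (-K * (s - 1)) = Real.exp (-(K * (s - t))) := by
    intro s; rw [← Real.exp_add]; congr 1; ring
  have hTpow : t ^ (-β) * t ^ (-δ + 1) = t ^ (-(δ - 1 + β)) := by
    rw [← Real.rpow_add ht0]; congr 1; ring
  rw [← MeasureTheory.integral_const_mul]
  rcases le_or_gt (K * t) 1 with hcase | hcase
  · -- small |k| : K ≤ 1/t
    have hKle : K ≤ 1 / t := by
      rw [le_div_iff₀ ht0]; linarith
    have hKβ : K ^ β ≤ t ^ (-β) := by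
      calc K ^ β ≤ (1 / t) ^ β := Real.rpow_le_rpow hK hKle hβ0
      _ = t ^ (-β) := by
        rw [one_div, ← Real.rpow_neg_one t, ← Real.rpow_mul ht0.le]
        congr 1; ring
    have hbound : ∀ s ∈ Set.Ioi t,
        Real.exp (K * (t - 1)) * (Real.exp (-K * (s - 1)) * K ^ β * s ^ (-δ) * mu α r k s)
          ≤ (t ^ (-β) * mu α r k t) * s ^ (-δ) := by
      intro s hs
      have hst : t < s := hs
      have hs0 : (0:ℝ) < s := lt_trans ht0 hst
      have h1 : Real.exp (K * (t - 1)) * (Real.exp (-K * (s - 1)) * K ^ β * s ^ (-δ) * mu α r k s)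
          = Real.exp (-(K * (s - t))) * (K ^ β * (s ^ (-δ) * mu α r k s)) := by
        rw [← hexpid s]; ring
      rw [h1]
      have hexple : Real.exp (-(K * (s - t))) ≤ 1 := by
        rw [Real.exp_le_one_iff]
        have : 0 ≤ K * (s - t) := mul_nonneg hK (by linarith)
        linarith
      calc Real.exp (-(K * (s - t))) * (K ^ β * (s ^ (-δ) * mu α r k s))
          ≤ 1 * (K ^ β * (s ^ (-δ) * mu α r k s)) := by
            apply mul_le_mul_of_nonneg_right hexple
            exact mul_nonneg (Real.rpow_nonneg hK β)
              (mul_nonneg (Real.rpow_nonneg hs0.le _) (hmu_nonneg s hs0))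
        _ ≤ 1 * (t ^ (-β) * (s ^ (-δ) * mu α r k t)) := by
            rw [one_mul, one_mul]
            apply mul_le_mul hKβ
            · exact mul_le_mul_of_nonneg_left (hmu_mono s hst.le) (Real.rpow_nonneg hs0.le _)
            · exact mul_nonneg (Real.rpow_nonneg hs0.le _) (hmu_nonneg s hs0)
            · exact Real.rpow_nonneg ht0.le _
        _ = (t ^ (-β) * mu α r k t) * s ^ (-δ) := by ring
    have hgint : IntegrableOn (fun s : ℝ => (t ^ (-β) * mu α r k t) * s ^ (-δ))
        (Set.Ioi t) := by
      exact (integrableOn_Ioi_rpow_of_lt (by linarith) ht0).const_mul _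
    have hfnn : ∀ᵐ s ∂(volume.restrict (Set.Ioi t)), 0 ≤
        Real.exp (K * (t - 1)) * (Real.exp (-K * (s - 1)) * K ^ β * s ^ (-δ) * mu α r k s) := by
      filter_upwards [ae_restrict_mem measurableSet_Ioi] with s hs
      have hs0 : (0:ℝ) < s := lt_trans ht0 hs
      have := hmu_nonneg s hs0
      have h1 := Real.rpow_nonneg hs0.le (-δ)
      have h2 := Real.rpow_nonneg hK β
      positivity
    have hfle : (fun s => Real.exp (K * (t - 1)) *
          (Real.exp (-K * (s - 1)) * K ^ β * s ^ (-δ) * mu α r k s))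
        ≤ᵐ[volume.restrict (Set.Ioi t)]
          fun s => (t ^ (-β) * mu α r k t) * s ^ (-δ) := by
      filter_upwards [ae_restrict_mem measurableSet_Ioi] with s hs
      exact hbound s hs
    calc (∫ s in Set.Ioi t, Real.exp (K * (t - 1)) *
            (Real.exp (-K * (s - 1)) * K ^ β * s ^ (-δ) * mu α r k s))
        ≤ ∫ s in Set.Ioi t, (t ^ (-β) * mu α r k t) * s ^ (-δ) :=
          integral_mono_of_nonneg hfnn hgint hfle
      _ = (t ^ (-β) * mu α r k t) * (-t ^ (-δ + 1) / (-δ + 1)) := by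
          rw [MeasureTheory.integral_const_mul, integral_Ioi_rpow_of_lt (by linarith) ht0]
      _ = (1 / (δ - 1)) * (t ^ (-(δ - 1 + β)) * mu α r k t) := by
          have h3 : -t ^ (-δ + 1) / (-δ + 1) = t ^ (-δ + 1) / (δ - 1) := by
            rw [div_eq_div_iff (by linarith) (by linarith)]; ring
          rw [← hTpow, h3]; ring
      _ ≤ (1 / (δ - 1) + 1) * t ^ (-(δ - 1 + β)) * mu α r k t := by
          have h1 : (0:ℝ) ≤ t ^ (-(δ - 1 + β)) := Real.rpow_nonneg ht0.le _
          have h2 : (0:ℝ) ≤ 1 / (δ - 1) := by positivity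
          nlinarith [mul_nonneg h1 hmut]
  · -- large |k| : K ≥ 1/t
    have hK0 : 0 < K := by
      by_contra h
      push_neg at h
      have : K = 0 := le_antisymm h hK
      rw [this] at hcase; simp at hcase; linarith
    have hKβ : K ^ (β - 1) ≤ t ^ (1 - β) := by
      have h1 : (1:ℝ) / t ≤ K := by
        rw [div_le_iff₀ ht0]; linarith
      calc K ^ (β - 1) ≤ (1 / t) ^ (β - 1) :=
            Real.rpow_le_rpow_of_nonpos (by positivity) h1 (by linarith)
        _ = t ^ (1 - β) := by
            rw [one_div, ← Real.rpow_neg_one t, ← Real.rpow_mul ht0.le]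
            · congr 1; ring
    have hbound : ∀ s ∈ Set.Ioi t,
        Real.exp (K * (t - 1)) * (Real.exp (-K * (s - 1)) * K ^ β * s ^ (-δ) * mu α r k s)
          ≤ (K ^ β * t ^ (-δ) * mu α r k t) * Real.exp (-(K * (s - t))) := by
      intro s hs
      have hst : t < s := hs
      have hs0 : (0:ℝ) < s := lt_trans ht0 hst
      have h1 : Real.exp (K * (t - 1)) * (Real.exp (-K * (s - 1)) * K ^ β * s ^ (-δ) * mu α r k s)
          = Real.exp (-(K * (s - t))) * (K ^ β * (s ^ (-δ) * mu α r k s)) := by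
        rw [← hexpid s]; ring
      rw [h1]
      have h2 : s ^ (-δ) * mu α r k s ≤ t ^ (-δ) * mu α r k t := by
        apply mul_le_mul
        · exact Real.rpow_le_rpow_of_nonpos ht0 hst.le (by linarith)
        · exact hmu_mono s hst.le
        · exact hmu_nonneg s hs0
        · exact Real.rpow_nonneg ht0.le _
      calc Real.exp (-(K * (s - t))) * (K ^ β * (s ^ (-δ) * mu α r k s))
          ≤ Real.exp (-(K * (s - t))) * (K ^ β * (t ^ (-δ) * mu α r k t)) := by
            apply mul_le_mul_of_nonneg_left _ (Real.exp_nonneg _)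
            exact mul_le_mul_of_nonneg_left h2 (Real.rpow_nonneg hK β)
        _ = (K ^ β * t ^ (-δ) * mu α r k t) * Real.exp (-(K * (s - t))) := by ring
    have hgint : IntegrableOn
        (fun s : ℝ => (K ^ β * t ^ (-δ) * mu α r k t) * Real.exp (-(K * (s - t))))
        (Set.Ioi t) := by
      have h1 : IntegrableOn (fun s : ℝ => Real.exp (-(K * s))) (Set.Ioi t) := by
        simpa [neg_mul] using exp_neg_integrableOn_Ioi t hK0
      have h2 : IntegrableOn (fun s : ℝ => Real.exp (-(K * (s - t)))) (Set.Ioi t) := by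
        have h1' : IntegrableOn (fun s : ℝ => Real.exp (K * t) * Real.exp (-(K * s)))
            (Set.Ioi t) := h1.const_mul _
        apply h1'.congr_fun _ measurableSet_Ioi
        intro s _
        show Real.exp (K * t) * Real.exp (-(K * s)) = Real.exp (-(K * (s - t)))
        rw [← Real.exp_add]; congr 1; ring
      exact h2.const_mul _
    have hfnn : ∀ᵐ s ∂(volume.restrict (Set.Ioi t)), 0 ≤
        Real.exp (K * (t - 1)) * (Real.exp (-K * (s - 1)) * K ^ β * s ^ (-δ) * mu α r k s) := by
      filter_upwards [ae_restrict_mem measurableSet_Ioi] with s hs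
      have hs0 : (0:ℝ) < s := lt_trans ht0 hs
      have := hmu_nonneg s hs0
      have h1 := Real.rpow_nonneg hs0.le (-δ)
      have h2 := Real.rpow_nonneg hK β
      positivity
    have hfle : (fun s => Real.exp (K * (t - 1)) *
          (Real.exp (-K * (s - 1)) * K ^ β * s ^ (-δ) * mu α r k s))
        ≤ᵐ[volume.restrict (Set.Ioi t)]
          fun s => (K ^ β * t ^ (-δ) * mu α r k t) * Real.exp (-(K * (s - t))) := by
      filter_upwards [ae_restrict_mem measurableSet_Ioi] with s hs
      exact hbound s hs
    have hintval : (∫ s in Set.Ioi t, Real.exp (-(K * (s - t)))) = 1 / K := by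
      have h1 : (∫ s in Set.Ioi t, Real.exp (-(K * (s - t))))
          = ∫ s in Set.Ioi t, Real.exp (K * t) * Real.exp (-(K * s)) := by
        apply setIntegral_congr_fun measurableSet_Ioi
        intro s _
        show Real.exp (-(K * (s - t))) = Real.exp (K * t) * Real.exp (-(K * s))
        rw [← Real.exp_add]; congr 1; ring
      rw [h1, MeasureTheory.integral_const_mul, integral_exp_neg_mul_Ioi hK0,
        Real.exp_neg]
      field_simp
    calc (∫ s in Set.Ioi t, Real.exp (K * (t - 1)) *
            (Real.exp (-K * (s - 1)) * K ^ β * s ^ (-δ) * mu α r k s))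
        ≤ ∫ s in Set.Ioi t, (K ^ β * t ^ (-δ) * mu α r k t) * Real.exp (-(K * (s - t))) :=
          integral_mono_of_nonneg hfnn hgint hfle
      _ = (K ^ β * t ^ (-δ) * mu α r k t) * (1 / K) := by
          rw [MeasureTheory.integral_const_mul, hintval]
      _ = K ^ (β - 1) * t ^ (-δ) * mu α r k t := by
          rw [Real.rpow_sub hK0, Real.rpow_one]; ring
      _ ≤ t ^ (1 - β) * t ^ (-δ) * mu α r k t := by
          apply mul_le_mul_of_nonneg_right _ hmut
          exact mul_le_mul_of_nonneg_right hKβ (Real.rpow_nonneg ht0.le _)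
      _ = 1 * t ^ (-(δ - 1 + β)) * mu α r k t := by
          rw [← Real.rpow_add ht0, one_mul]; congr 2; ring
      _ ≤ (1 / (δ - 1) + 1) * t ^ (-(δ - 1 + β)) * mu α r k t := by
          have h1 : (0:ℝ) ≤ t ^ (-(δ - 1 + β)) := Real.rpow_nonneg ht0.le _
          have h2 : (0:ℝ) ≤ 1 / (δ - 1) := by positivity
          nlinarith [mul_nonneg h1 hmut]
end
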